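/- arXiv:2008.13010 — 2 statements merged into one kernel-verified Lean document; each statement's English description precedes it below -/
import Mathlib

section
/- Let A ∈ ℝ^{n×n} and B ∈ ℝ^{n×m} be such that there exists K ∈ ℝ^{m×n} with (A+BK)^k → 0 as k → ∞, let 𝒞 ⊆ ℝ^{n+m} be a proper C-set, and let 𝒬_f ⊆ ℝⁿ be a proper C-set. Then there exists a proper C-set ℒ ⊆ ℝⁿ with ℒ ⊆ 𝒬_f verifying the control Lyapunov decrease condition: for every x ∈ ℝⁿ there exists u ∈ ℝᵐ such that γ(ℒ, Ax+Bu) + γ(𝒞, (x,u)) ≤ γ(ℒ, x). -/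
set_option maxHeartbeats 2000000
set_option synthInstance.maxHeartbeats 1000000

open Pointwise Filter Topology Matrix

noncomputable section

/-- ℝⁿ with the standard (Euclidean) inner product. -/
abbrev Rsp (n : ℕ) := EuclideanSpace ℝ (Fin n)

/-- ℝ^{n+m} realized as the L²-product ℝⁿ × ℝᵐ. -/
abbrev Rsp2 (n m : ℕ) := WithLp 2 (Rsp n × Rsp m)

/-- A C-set: compact, convex, containing the origin. -/
def IsCSet {E : Type*} [NormedAddCommGroup E] [NormedSpace ℝ E] (X : Set E) : Prop :=
  IsCompact X ∧ Convex ℝ X ∧ (0 : E) ∈ X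

/-- A proper C-set: a C-set containing the origin in its interior. -/
def IsProperCSet {E : Type*} [NormedAddCommGroup E] [NormedSpace ℝ E] (X : Set E) : Prop :=
  IsCSet X ∧ (0 : E) ∈ interior X

/-- The polar set 𝒳* = {y : ⟨y,x⟩ ≤ 1 for all x ∈ 𝒳}. -/
def polarSet {E : Type*} [NormedAddCommGroup E] [InnerProductSpace ℝ E] (X : Set E) : Set E :=
  {y | ∀ x ∈ X, inner ℝ y x ≤ (1 : ℝ)}

/-- The Minkowski (gauge) function γ(𝒳,y) = inf{η ≥ 0 : y ∈ η𝒳}. -/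
def mgauge {E : Type*} [NormedAddCommGroup E] [NormedSpace ℝ E] (X : Set E) (y : E) : ℝ :=
  sInf {η : ℝ | 0 ≤ η ∧ y ∈ η • X}

variable {n m : ℕ}

/-- The map M = (A B) : ℝ^{n+m} → ℝⁿ, M(x,u) = Ax + Bu. -/
def Mfwd (A : Matrix (Fin n) (Fin n) ℝ) (B : Matrix (Fin n) (Fin m) ℝ) (w : Rsp2 n m) : Rsp n :=
  Matrix.toEuclideanLin A w.ofLp.1 + Matrix.toEuclideanLin B w.ofLp.2

/-- The transpose map Mᵀ : ℝⁿ → ℝ^{n+m}, Mᵀp = (Aᵀp, Bᵀp). -/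
def Mtr (A : Matrix (Fin n) (Fin n) ℝ) (B : Matrix (Fin n) (Fin m) ℝ) (p : Rsp n) : Rsp2 n m :=
  WithLp.toLp 2 (Matrix.toEuclideanLin Aᵀ p, Matrix.toEuclideanLin Bᵀ p)

/-- The projection P_x : ℝ^{n+m} → ℝⁿ, (x,u) ↦ x. -/
def Pxproj : Rsp2 n m → Rsp n := fun w => w.ofLp.1

/-- For a set containing `0`, `mgauge` agrees with Mathlib's `gauge`. -/
theorem mgauge_eq_gauge {E : Type*} [NormedAddCommGroup E] [NormedSpace ℝ E] {X : Set E}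
    (h0 : (0 : E) ∈ X) (y : E) : mgauge X y = gauge X y := by
  rcases eq_or_ne y 0 with rfl | hy
  · rw [gauge_zero]
    refine le_antisymm ?_ ?_
    · refine csInf_le ⟨0, fun r hr => hr.1⟩ ⟨le_refl 0, ?_⟩
      rw [Set.zero_smul_set ⟨0, h0⟩]
      exact rfl
    · exact le_csInf ⟨0, le_refl 0, by rw [Set.zero_smul_set ⟨0, h0⟩]; exact rfl⟩ fun b hb => hb.1
  · unfold mgauge gauge
    congr 1
    ext η
    simp only [Set.mem_setOf_eq]
    constructor
    · rintro ⟨h1, h2⟩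
      rcases h1.eq_or_lt with rfl | h
      · exfalso
        rw [Set.zero_smul_set ⟨0, h0⟩] at h2
        exact hy h2
      · exact ⟨h, h2⟩
    · rintro ⟨h1, h2⟩; exact ⟨h1.le, h2⟩

/-- If the powers of an element of a normed ring tend to zero in norm, the norms of the
powers form a summable family. -/
theorem summable_norm_pow_of_tendsto {R : Type*} [NormedRing R] {T : R}
    (h : Filter.Tendsto (fun k : ℕ => ‖T ^ k‖) Filter.atTop (nhds 0)) :
    Summable fun k : ℕ => ‖T ^ k‖ := by
  obtain ⟨N₀, hN₀⟩ := Filter.eventually_atTop.mp (h.eventually_lt_const (by norm_num : (0:ℝ) < 1/2))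
  set N := N₀ + 1 with hNdef
  haveI : NeZero N := ⟨by omega⟩
  have hN : ‖T ^ N‖ ≤ 1/2 := (hN₀ N (by omega)).le
  set Cm : ℝ := ∑ i ∈ Finset.range N, ‖T ^ i‖ with hCm
  have hCm_le : ∀ j : Fin N, ‖T ^ (j : ℕ)‖ ≤ Cm := by
    intro j
    exact Finset.single_le_sum (fun i _ => norm_nonneg _) (Finset.mem_range.mpr j.isLt)
  have key : ∀ q j : ℕ, ‖T ^ (q * N + j)‖ ≤ (1/2) ^ q * ‖T ^ j‖ := by
    intro q
    induction q with
    | zero => intro j; simp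
    | succ q ih =>
      intro j
      have he : (q + 1) * N + j = N + (q * N + j) := by ring
      calc ‖T ^ ((q + 1) * N + j)‖ = ‖T ^ N * T ^ (q * N + j)‖ := by rw [he, pow_add]
        _ ≤ ‖T ^ N‖ * ‖T ^ (q * N + j)‖ := norm_mul_le _ _
        _ ≤ (1/2) * ((1/2) ^ q * ‖T ^ j‖) := by
            apply mul_le_mul hN (ih j) (norm_nonneg _) (by norm_num)
        _ = (1/2) ^ (q + 1) * ‖T ^ j‖ := by ring
  rw [← (Nat.divModEquiv N).symm.summable_iff]
  have hg : Summable fun p : ℕ × Fin N => (1/2 : ℝ) ^ p.1 * Cm := by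
    rw [summable_prod_of_nonneg (fun p => by positivity)]
    constructor
    · intro q; exact Summable.of_finite
    · simp only [tsum_fintype, Finset.sum_const, Finset.card_univ, Fintype.card_fin,
        nsmul_eq_mul]
      exact ((summable_geometric_of_lt_one (by norm_num) (by norm_num)).mul_right Cm).mul_left _
  refine Summable.of_nonneg_of_le (fun p => norm_nonneg _) ?_ hg
  intro p
  show ‖T ^ ((Nat.divModEquiv N).symm p)‖ ≤ (1/2 : ℝ) ^ p.1 * Cm
  have hp : ((Nat.divModEquiv N).symm p : ℕ) = p.1 * N + (p.2 : ℕ) := rfl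
  rw [hp]
  calc ‖T ^ (p.1 * N + (p.2 : ℕ))‖ ≤ (1/2) ^ p.1 * ‖T ^ (p.2 : ℕ)‖ := key _ _
    _ ≤ (1/2 : ℝ) ^ p.1 * Cm := by
        apply mul_le_mul_of_nonneg_left (hCm_le p.2) (by positivity)

/-- under strict stabilizability, a Lyapunov proper C-set ℒ can be
chosen inside a given proper C-set 𝒬_f. -/
theorem stmt_8 (n m : ℕ) (A : Matrix (Fin n) (Fin n) ℝ) (B : Matrix (Fin n) (Fin m) ℝ)
    (hstab : ∃ K : Matrix (Fin m) (Fin n) ℝ,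
      Tendsto (fun k : ℕ => (A + B * K) ^ k) atTop (nhds 0))
    (C : Set (Rsp2 n m)) (hC : IsProperCSet C)
    (Qf : Set (Rsp n)) (hQf : IsProperCSet Qf) :
    ∃ L : Set (Rsp n), IsProperCSet L ∧ L ⊆ Qf ∧
      ∀ x : Rsp n, ∃ u : Rsp m,
        mgauge L (Mfwd A B (WithLp.toLp 2 (x, u))) + mgauge C (WithLp.toLp 2 (x, u) : Rsp2 n m) ≤ mgauge L x := by
  obtain ⟨K, hK⟩ := hstab
  obtain ⟨⟨hCcomp, hCconv, hC0⟩, hCint⟩ := hC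
  obtain ⟨⟨hQcomp, hQconv, hQ0⟩, hQint⟩ := hQf
  -- constants for C and Qf
  have hCnhds : C ∈ 𝓝 (0 : Rsp2 n m) := mem_interior_iff_mem_nhds.mp hCint
  have hCabs : Absorbent ℝ C := absorbent_nhds_zero hCnhds
  obtain ⟨δC, hδC, hballC⟩ := Metric.mem_nhds_iff.mp hCnhds
  obtain ⟨RC, hRC, hCR⟩ := hCcomp.isBounded.subset_ball_lt 0 0
  obtain ⟨δQ, hδQ, hballQ⟩ := Metric.mem_nhds_iff.mp (mem_interior_iff_mem_nhds.mp hQint)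
  -- gauge bounds for C
  have hgC_le : ∀ w : Rsp2 n m, gauge C w ≤ ‖w‖ / δC := by
    intro w
    have h := gauge_mono (absorbent_ball_zero hδC) hballC w
    rwa [gauge_ball hδC.le] at h
  have hgC_ge : ∀ w : Rsp2 n m, ‖w‖ / RC ≤ gauge C w := by
    intro w
    have h := gauge_mono hCabs hCR w
    rwa [gauge_ball hRC.le] at h
  -- the closed loop operator and the feedback
  set T : Rsp n →L[ℝ] Rsp n := Matrix.toEuclideanCLM (𝕜 := ℝ) (A + B * K) with hTdef
  set Kc : Rsp n →L[ℝ] Rsp m :=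
    LinearMap.toContinuousLinearMap (Matrix.toEuclideanLin K) with hKcdef
  have hMf : ∀ x : Rsp n, Mfwd A B (WithLp.toLp 2 (x, Kc x)) = T x := by
    intro x
    have h1 : T x = Matrix.toEuclideanLin (A + B * K) x :=
      LinearMap.congr_fun (Matrix.coe_toEuclideanCLM_eq_toEuclideanLin (A + B * K)) x
    have h2 : Matrix.toEuclideanLin (B * K) x
        = Matrix.toEuclideanLin B (Matrix.toEuclideanLin K x) := by
      simp [Matrix.toEuclideanLin_apply, Matrix.mulVec_mulVec]
    show Matrix.toEuclideanLin A x + Matrix.toEuclideanLin B (Kc x) = T x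
    rw [h1, map_add, LinearMap.add_apply, h2]
    rfl
  -- powers of T tend to zero in norm
  let lin : Matrix (Fin n) (Fin n) ℝ →ₗ[ℝ] (Rsp n →L[ℝ] Rsp n) :=
    { toFun := fun M => Matrix.toEuclideanCLM (𝕜 := ℝ) M
      map_add' := fun M N => map_add _ M N
      map_smul' := fun c M => map_smul _ c M }
  have hlin : ∀ M, lin M = Matrix.toEuclideanCLM (𝕜 := ℝ) M := fun _ => rfl
  have hT0 : Tendsto (fun k : ℕ => ‖T ^ k‖) atTop (nhds 0) := by
    have hc : Continuous lin := lin.continuous_of_finiteDimensional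
    have h1 : Tendsto (fun k : ℕ => lin ((A + B * K) ^ k)) atTop (nhds (lin 0)) :=
      (hc.tendsto 0).comp hK
    have h2 : ∀ k : ℕ, lin ((A + B * K) ^ k) = T ^ k := by
      intro k; rw [hlin, map_pow]
    rw [map_zero] at h1
    simp_rw [h2] at h1
    simpa using h1.norm
  have hSumT : Summable fun k : ℕ => ‖T ^ k‖ := summable_norm_pow_of_tendsto hT0
  -- the stage cost g
  set jp : Rsp n → Rsp2 n m := fun x => (WithLp.toLp 2 (x, Kc x) : Rsp2 n m) with hjpdef
  set g : Rsp n → ℝ := fun x => gauge C (jp x) with hgdef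
  have hpair_add : ∀ x y : Rsp n, jp (x + y) = jp x + jp y := by
    intro x y; rw [hjpdef]; simp only; rw [map_add]; rfl
  have hpair_smul : ∀ (a : ℝ) (x : Rsp n), jp (a • x) = a • jp x := by
    intro a x; rw [hjpdef]; simp only; rw [_root_.map_smul]; rfl
  have hpair_fst : ∀ x : Rsp n, (jp x).fst = x := fun x => rfl
  have hpair_snd : ∀ x : Rsp n, (jp x).snd = Kc x := fun x => rfl
  have hpair_le : ∀ x : Rsp n, ‖jp x‖ ≤ (1 + ‖Kc‖) * ‖x‖ := by
    intro x
    rw [WithLp.prod_norm_eq_of_L2, hpair_fst, hpair_snd]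
    have h1 : ‖Kc x‖ ≤ ‖Kc‖ * ‖x‖ := Kc.le_opNorm x
    have h2 : Real.sqrt (‖x‖ ^ 2 + ‖Kc x‖ ^ 2) ≤ ‖x‖ + ‖Kc x‖ := by
      rw [show ‖x‖ + ‖Kc x‖ = Real.sqrt ((‖x‖ + ‖Kc x‖) ^ 2) from
        (Real.sqrt_sq (by positivity)).symm]
      apply Real.sqrt_le_sqrt
      nlinarith [norm_nonneg x, norm_nonneg (Kc x)]
    calc Real.sqrt (‖x‖ ^ 2 + ‖Kc x‖ ^ 2) ≤ ‖x‖ + ‖Kc x‖ := h2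
      _ ≤ ‖x‖ + ‖Kc‖ * ‖x‖ := by linarith
      _ = (1 + ‖Kc‖) * ‖x‖ := by ring
  have hpair_ge : ∀ x : Rsp n, ‖x‖ ≤ ‖jp x‖ := by
    intro x
    rw [WithLp.prod_norm_eq_of_L2, hpair_fst, hpair_snd]
    rw [show ‖x‖ = Real.sqrt (‖x‖ ^ 2) from (Real.sqrt_sq (norm_nonneg x)).symm]
    apply Real.sqrt_le_sqrt
    nlinarith [norm_nonneg (Kc x), Real.sq_sqrt (sq_nonneg ‖x‖)]
  set c1 : ℝ := (1 + ‖Kc‖) / δC with hc1def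
  have hc1 : 0 < c1 := by positivity
  have hgnonneg : ∀ x : Rsp n, 0 ≤ g x := fun x => gauge_nonneg _
  have hgle : ∀ x : Rsp n, g x ≤ c1 * ‖x‖ := by
    intro x
    calc g x ≤ ‖jp x‖ / δC := hgC_le _
      _ ≤ ((1 + ‖Kc‖) * ‖x‖) / δC := by gcongr; exact hpair_le x
      _ = c1 * ‖x‖ := by rw [hc1def]; ring
  have hgge : ∀ x : Rsp n, RC⁻¹ * ‖x‖ ≤ g x := by
    intro x
    have h1 : ‖x‖ / RC ≤ ‖jp x‖ / RC := by gcongr; exact hpair_ge x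
    calc RC⁻¹ * ‖x‖ = ‖x‖ / RC := by ring
      _ ≤ ‖jp x‖ / RC := h1
      _ ≤ g x := hgC_ge _
  have hgsmul : ∀ (a : ℝ), 0 ≤ a → ∀ x : Rsp n, g (a • x) = a * g x := by
    intro a ha x
    rw [hgdef]
    simp only
    rw [hpair_smul, gauge_smul_of_nonneg ha, smul_eq_mul]
  have hgadd : ∀ x y : Rsp n, g (x + y) ≤ g x + g y := by
    intro x y
    rw [hgdef]
    simp only
    rw [hpair_add]
    exact gauge_add_le hCconv hCabs _ _
  -- the Lyapunov function V
  have hterm_le : ∀ (x : Rsp n) (k : ℕ), g ((T ^ k) x) ≤ c1 * ‖x‖ * ‖T ^ k‖ := by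
    intro x k
    calc g ((T ^ k) x) ≤ c1 * ‖(T ^ k) x‖ := hgle _
      _ ≤ c1 * (‖T ^ k‖ * ‖x‖) := by
          exact mul_le_mul_of_nonneg_left ((T ^ k).le_opNorm x) hc1.le
      _ = c1 * ‖x‖ * ‖T ^ k‖ := by ring
  have hsumx : ∀ x : Rsp n, Summable fun k : ℕ => g ((T ^ k) x) := by
    intro x
    exact Summable.of_nonneg_of_le (fun k => hgnonneg _) (hterm_le x) (hSumT.mul_left _)
  set V : Rsp n → ℝ := fun x => ∑' k : ℕ, g ((T ^ k) x) with hVdef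
  have hVnonneg : ∀ x, 0 ≤ V x := fun x => tsum_nonneg fun k => hgnonneg _
  have hVge : ∀ x : Rsp n, RC⁻¹ * ‖x‖ ≤ V x := by
    intro x
    refine (hgge x).trans ?_
    have h := (hsumx x).le_tsum 0 (fun k _ => hgnonneg _)
    simpa only [pow_zero, ContinuousLinearMap.one_apply] using h
  set S : ℝ := ∑' k : ℕ, ‖T ^ k‖ with hSdef
  have hS0 : 0 ≤ S := tsum_nonneg fun k => norm_nonneg _
  set c2 : ℝ := c1 * S + 1 with hc2def
  have hc2 : 0 < c2 := by positivity
  have hVle : ∀ x : Rsp n, V x ≤ c2 * ‖x‖ := by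
    intro x
    have h1 : V x ≤ ∑' k : ℕ, c1 * ‖x‖ * ‖T ^ k‖ :=
      Summable.tsum_le_tsum (hterm_le x) (hsumx x) (hSumT.mul_left _)
    have h2 : ∑' k : ℕ, c1 * ‖x‖ * ‖T ^ k‖ = c1 * ‖x‖ * S := tsum_mul_left
    nlinarith [norm_nonneg x, mul_nonneg hc1.le (norm_nonneg x)]
  have hVsmul : ∀ (a : ℝ), 0 ≤ a → ∀ x : Rsp n, V (a • x) = a * V x := by
    intro a ha x
    rw [hVdef]
    simp only
    calc (∑' k : ℕ, g ((T ^ k) (a • x))) = ∑' k : ℕ, a * g ((T ^ k) x) := by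
          congr 1; funext k; rw [_root_.map_smul, hgsmul a ha]
      _ = a * ∑' k : ℕ, g ((T ^ k) x) := tsum_mul_left
  have hVadd : ∀ x y : Rsp n, V (x + y) ≤ V x + V y := by
    intro x y
    rw [hVdef]
    simp only
    calc (∑' k : ℕ, g ((T ^ k) (x + y)))
        ≤ ∑' k : ℕ, (g ((T ^ k) x) + g ((T ^ k) y)) := by
          apply Summable.tsum_le_tsum _ _ ((hsumx x).add (hsumx y))
          · intro k; rw [map_add]; exact hgadd _ _
          · have : ∀ k : ℕ, (T ^ k) (x + y) = (T ^ k) x + (T ^ k) y := fun k => map_add _ _ _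
            simp_rw [this]
            exact Summable.of_nonneg_of_le (fun k => hgnonneg _)
              (fun k => (hgadd _ _)) ((hsumx x).add (hsumx y))
      _ = (∑' k : ℕ, g ((T ^ k) x)) + ∑' k : ℕ, g ((T ^ k) y) := Summable.tsum_add (hsumx x) (hsumx y)
  have hV0 : V 0 = 0 := by
    have h := hVsmul 0 le_rfl 0
    simpa using h
  have hVdec : ∀ x : Rsp n, V x = g x + V (T x) := by
    intro x
    have h1 := Summable.tsum_eq_zero_add (hsumx x)
    simp only [pow_zero, ContinuousLinearMap.one_apply] at h1
    have h2 : ∀ k : ℕ, (T ^ (k + 1)) x = (T ^ k) (T x) := by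
      intro k
      rw [pow_succ]
      rfl
    simp_rw [h2] at h1
    exact h1
  -- continuity of V
  have hVlip : ∀ x y : Rsp n, V x ≤ V y + c2 * ‖x - y‖ := by
    intro x y
    have h1 : V x ≤ V y + V (x - y) := by
      have := hVadd y (x - y)
      rwa [add_sub_cancel] at this
    linarith [hVle (x - y)]
  have hVcont : Continuous V := by
    have hlip : LipschitzWith c2.toNNReal V := by
      apply LipschitzWith.of_dist_le_mul
      intro x y
      rw [Real.dist_eq, Real.coe_toNNReal _ hc2.le, dist_eq_norm]
      rw [abs_sub_le_iff]
      constructor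
      · linarith [hVlip x y]
      · rw [norm_sub_rev]
        linarith [hVlip y x]
    exact hlip.continuous
  -- the set L
  set ε : ℝ := min 1 (RC⁻¹ * (δQ / 2)) with hεdef
  have hε : 0 < ε := lt_min one_pos (by positivity)
  have hε1 : ε ≤ 1 := min_le_left _ _
  set L : Set (Rsp n) := {x : Rsp n | V x ≤ ε} with hLdef
  have hL0 : (0 : Rsp n) ∈ L := by
    show V 0 ≤ ε
    rw [hV0]; exact hε.le
  have hLconv : Convex ℝ L := by
    intro x hx y hy a b ha hb hab
    show V (a • x + b • y) ≤ ε
    have h1 : V (a • x + b • y) ≤ a * V x + b * V y := by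
      calc V (a • x + b • y) ≤ V (a • x) + V (b • y) := hVadd _ _
        _ = a * V x + b * V y := by rw [hVsmul a ha, hVsmul b hb]
    have hx' : V x ≤ ε := hx
    have hy' : V y ≤ ε := hy
    nlinarith
  have hLclosed : IsClosed L := isClosed_le hVcont continuous_const
  have hLsub : L ⊆ Metric.closedBall 0 (ε * RC) := by
    intro x hx
    have h1 : RC⁻¹ * ‖x‖ ≤ ε := le_trans (hVge x) hx
    rw [Metric.mem_closedBall, dist_zero_right]
    have h2 : ‖x‖ = RC * (RC⁻¹ * ‖x‖) := by field_simp
    rw [h2]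
    calc RC * (RC⁻¹ * ‖x‖) ≤ RC * ε := by
          exact mul_le_mul_of_nonneg_left h1 hRC.le
      _ = ε * RC := by ring
  have hLcomp : IsCompact L :=
    (isCompact_closedBall (0 : Rsp n) (ε * RC)).of_isClosed_subset hLclosed hLsub
  have hLint : (0 : Rsp n) ∈ interior L := by
    rw [mem_interior]
    refine ⟨Metric.ball 0 (ε / c2), ?_, Metric.isOpen_ball, Metric.mem_ball_self (by positivity)⟩
    intro x hx
    rw [Metric.mem_ball, dist_zero_right] at hx
    show V x ≤ ε
    calc V x ≤ c2 * ‖x‖ := hVle x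
      _ ≤ c2 * (ε / c2) := by exact mul_le_mul_of_nonneg_left hx.le hc2.le
      _ = ε := by field_simp
  have hLQf : L ⊆ Qf := by
    intro x hx
    apply hballQ
    rw [Metric.mem_ball, dist_zero_right]
    have h1 : RC⁻¹ * ‖x‖ ≤ ε := le_trans (hVge x) hx
    have h2 : ε ≤ RC⁻¹ * (δQ / 2) := min_le_right _ _
    have h3 : RC⁻¹ * ‖x‖ ≤ RC⁻¹ * (δQ / 2) := le_trans h1 h2
    have h4 : ‖x‖ ≤ δQ / 2 := by
      have := mul_le_mul_of_nonneg_left h3 hRC.le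
      rwa [← mul_assoc, ← mul_assoc, mul_inv_cancel₀ hRC.ne', one_mul, one_mul] at this
    linarith
  have hLabs : Absorbent ℝ L := absorbent_nhds_zero (mem_interior_iff_mem_nhds.mp hLint)
  -- gauge of L equals V / ε
  have hup : ∀ y : Rsp n, gauge L y ≤ V y / ε := by
    intro y
    refine le_of_forall_pos_le_add ?_
    intro δ hδ
    have hr : 0 < V y / ε + δ := add_pos_of_nonneg_of_pos (div_nonneg (hVnonneg y) hε.le) hδ
    apply gauge_le_of_mem hr.le
    rw [Set.mem_smul_set_iff_inv_smul_mem₀ hr.ne']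
    show V ((V y / ε + δ)⁻¹ • y) ≤ ε
    rw [hVsmul _ (inv_nonneg.mpr hr.le)]
    rw [inv_mul_le_iff₀ hr]
    have h5 : (V y / ε + δ) * ε = V y + δ * ε := by
      rw [add_mul, div_mul_cancel₀ _ hε.ne']
    nlinarith [mul_pos hδ hε]
  have hdown : ∀ y : Rsp n, V y / ε ≤ gauge L y := by
    intro y
    refine le_csInf hLabs.gauge_set_nonempty ?_
    rintro r ⟨hr, z, hz, rfl⟩
    have hz' : V z ≤ ε := hz
    rw [hVsmul r hr.le, div_le_iff₀ hε]
    calc r * V z ≤ r * ε := mul_le_mul_of_nonneg_left hz' hr.le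
      _ = r * ε := rfl
  -- conclusion
  refine ⟨L, ⟨⟨hLcomp, hLconv, hL0⟩, hLint⟩, hLQf, ?_⟩
  intro x
  refine ⟨Kc x, ?_⟩
  rw [mgauge_eq_gauge hL0, mgauge_eq_gauge hC0, mgauge_eq_gauge hL0, hMf x]
  have h1 := hup (T x)
  have h2 := hdown x
  have h3 := hVdec x
  have h4 : g x ≤ g x / ε := by
    rw [le_div_iff₀ hε]
    exact mul_le_of_le_one_right (hgnonneg x) hε1
  have h5 : V x / ε = g x / ε + V (T x) / ε := by
    rw [h3, add_div]
  have main : gauge L (T x) + g x ≤ gauge L x := by linarith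
  exact main

end
end

section
/- Let 𝒞 ⊆ ℝ^{n+m} be a proper C-set, let A ∈ ℝ^{n×n}, B ∈ ℝ^{n×m}, and let S ⊆ ℝⁿ be a C-set. Define the sequences 𝒯₁ = (𝒞* ⊕ MᵀS)*, 𝒫₁ = P_x𝒯₁, and for k ≥ 1, 𝒯_{k+1} = (𝒞* ⊕ Mᵀ𝒫_k*)*, 𝒫_{k+1} = P_x𝒯_{k+1}. Then for every k ≥ 1, 𝒯_k is a proper C-set in ℝ^{n+m} and 𝒫_k is a proper C-set in ℝⁿ. -/
open Pointwise Filter Topology Matrix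

noncomputable section

variable {n m : ℕ}

/-! ### Auxiliary lemmas -/

section PolarLemmas

variable {E : Type*} [NormedAddCommGroup E] [InnerProductSpace ℝ E]

lemma zero_mem_polarSet (X : Set E) : (0 : E) ∈ polarSet X := by
  intro x hx
  simp [polarSet]

lemma convex_polarSet (X : Set E) : Convex ℝ (polarSet X) := by
  intro y hy z hz a b ha hb hab x hx
  have h1 := hy x hx
  have h2 := hz x hx
  have : inner ℝ (a • y + b • z) x = a * inner ℝ y x + b * inner ℝ z x := by
    rw [inner_add_left, real_inner_smul_left, real_inner_smul_left]
  calc inner ℝ (a • y + b • z) x = a * inner ℝ y x + b * inner ℝ z x := this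
    _ ≤ a * 1 + b * 1 := by
        gcongr
    _ = 1 := by linarith

lemma isClosed_polarSet (X : Set E) : IsClosed (polarSet X) := by
  have : polarSet X = ⋂ x ∈ X, {y : E | inner ℝ y x ≤ (1 : ℝ)} := by
    ext y; simp [polarSet]
  rw [this]
  refine isClosed_biInter fun x _ => ?_
  exact isClosed_le (Continuous.inner continuous_id continuous_const) continuous_const

lemma isBounded_polarSet {X : Set E} (h : (0 : E) ∈ interior X) :
    Bornology.IsBounded (polarSet X) := by
  obtain ⟨ε, hε, hball⟩ := Metric.isOpen_iff.mp isOpen_interior 0 h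
  rw [Metric.isBounded_iff_subset_closedBall 0]
  refine ⟨2 / ε, fun y hy => ?_⟩
  rw [Metric.mem_closedBall, dist_zero_right]
  by_cases hy0 : y = 0
  · simp only [hy0, norm_zero]; positivity
  · have hny : 0 < ‖y‖ := norm_pos_iff.mpr hy0
    set x : E := (ε / 2 * ‖y‖⁻¹) • y with hxdef
    have hxn : ‖x‖ = ε / 2 := by
      rw [hxdef, norm_smul, Real.norm_eq_abs, abs_of_pos (by positivity)]
      field_simp
    have hxX : x ∈ X := by
      apply interior_subset
      apply hball
      rw [Metric.mem_ball, dist_zero_right, hxn]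
      linarith
    have := hy x hxX
    rw [hxdef, real_inner_smul_right, real_inner_self_eq_norm_sq] at this
    have key : ε / 2 * ‖y‖ ≤ 1 := by
      have : ε / 2 * ‖y‖⁻¹ * ‖y‖ ^ 2 = ε / 2 * ‖y‖ := by
        field_simp
      linarith [this ▸ ‹ε / 2 * ‖y‖⁻¹ * ‖y‖ ^ 2 ≤ 1›]
    rw [le_div_iff₀ (by positivity : (0:ℝ) < ε)]
    nlinarith

lemma zero_mem_interior_polarSet {X : Set E} (h : Bornology.IsBounded X) :
    (0 : E) ∈ interior (polarSet X) := by
  obtain ⟨r, hr⟩ := (Metric.isBounded_iff_subset_closedBall 0).mp h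
  set R := max r 1 with hRdef
  have hR : 0 < R := lt_of_lt_of_le one_pos (le_max_right _ _)
  have hsub : Metric.ball (0 : E) R⁻¹ ⊆ polarSet X := by
    intro y hy x hx
    rw [Metric.mem_ball, dist_zero_right] at hy
    have hxr : ‖x‖ ≤ R := le_trans (by simpa using hr hx) (le_max_left _ _)
    calc (inner ℝ y x : ℝ) ≤ ‖y‖ * ‖x‖ := real_inner_le_norm y x
      _ ≤ ‖y‖ * R := by gcongr
      _ ≤ R⁻¹ * R := mul_le_mul_of_nonneg_right hy.le hR.le
      _ = 1 := inv_mul_cancel₀ hR.ne'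
  have : (0 : E) ∈ Metric.ball (0 : E) R⁻¹ :=
    Metric.mem_ball_self (by positivity)
  exact interior_maximal hsub Metric.isOpen_ball this

lemma isProperCSet_polarSet {X : Set E} [FiniteDimensional ℝ E]
    (hb : Bornology.IsBounded X) (hi : (0 : E) ∈ interior X) :
    IsProperCSet (polarSet X) := by
  refine ⟨⟨?_, convex_polarSet X, zero_mem_polarSet X⟩, zero_mem_interior_polarSet hb⟩
  exact Metric.isCompact_of_isClosed_isBounded (isClosed_polarSet X) (isBounded_polarSet hi)

end PolarLemmas

/-- `Mtr` as a linear map. -/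
def MtrL (A : Matrix (Fin n) (Fin n) ℝ) (B : Matrix (Fin n) (Fin m) ℝ) :
    Rsp n →ₗ[ℝ] Rsp2 n m where
  toFun := Mtr A B
  map_add' p q := by simp [Mtr]; rfl
  map_smul' c p := by simp [Mtr]; rfl

lemma continuous_Mtr (A : Matrix (Fin n) (Fin n) ℝ) (B : Matrix (Fin n) (Fin m) ℝ) :
    Continuous (Mtr A B : Rsp n → Rsp2 n m) :=
  (WithLp.prodContinuousLinearEquiv 2 ℝ (Rsp n) (Rsp m)).symm.continuous.comp
    (((Matrix.toEuclideanLin Aᵀ).continuous_of_finiteDimensional).prodMk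
      ((Matrix.toEuclideanLin Bᵀ).continuous_of_finiteDimensional))

lemma Mtr_zero (A : Matrix (Fin n) (Fin n) ℝ) (B : Matrix (Fin n) (Fin m) ℝ) :
    Mtr A B (0 : Rsp n) = 0 :=
  (MtrL A B).map_zero

/-- `Pxproj` as a continuous linear map. -/
def PxL : Rsp2 n m →L[ℝ] Rsp n :=
  (ContinuousLinearMap.fst ℝ (Rsp n) (Rsp m)).comp
    (WithLp.prodContinuousLinearEquiv 2 ℝ (Rsp n) (Rsp m)).toContinuousLinearMap

lemma Pxproj_eq : (Pxproj : Rsp2 n m → Rsp n) = ⇑(PxL (n := n) (m := m)) := rfl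

lemma Pxproj_surjective : Function.Surjective (Pxproj : Rsp2 n m → Rsp n) := by
  intro p
  exact ⟨WithLp.toLp 2 (p, 0), rfl⟩

/-- The key step: the polar of `polarSet C + Mtr A B '' W` is a proper C-set,
for `W` compact containing `0`. -/
lemma step_properCSet {C : Set (Rsp2 n m)} (hC : IsProperCSet C)
    (A : Matrix (Fin n) (Fin n) ℝ) (B : Matrix (Fin n) (Fin m) ℝ)
    {W : Set (Rsp n)} (hWc : IsCompact W) (hW0 : (0 : Rsp n) ∈ W) :
    IsProperCSet (polarSet (polarSet C + Mtr A B '' W)) := by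
  obtain ⟨⟨hCcomp, _, _⟩, hCint⟩ := hC
  have hbound : Bornology.IsBounded (polarSet C + Mtr A B '' W) := by
    refine Bornology.IsBounded.add (isBounded_polarSet hCint) ?_
    exact (hWc.image (continuous_Mtr A B)).isBounded
  have hint : (0 : Rsp2 n m) ∈ interior (polarSet C + Mtr A B '' W) := by
    have h0p : (0 : Rsp2 n m) ∈ interior (polarSet C) :=
      zero_mem_interior_polarSet hCcomp.isBounded
    have hsub : interior (polarSet C) ⊆ polarSet C + Mtr A B '' W := by
      intro y hy
      refine ⟨y, interior_subset hy, 0, ⟨0, hW0, Mtr_zero A B⟩, add_zero y⟩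
    exact interior_maximal hsub isOpen_interior h0p
  exact isProperCSet_polarSet hbound hint

/-- Projection of a proper C-set is a proper C-set. -/
lemma proj_properCSet {T : Set (Rsp2 n m)} (h : IsProperCSet T) :
    IsProperCSet (Pxproj '' T) := by
  obtain ⟨⟨hc, hconv, h0⟩, hint⟩ := h
  rw [Pxproj_eq]
  refine ⟨⟨hc.image (PxL.continuous), ?_, ⟨0, h0, map_zero _⟩⟩, ?_⟩
  · exact hconv.linear_image (PxL.toLinearMap)
  · have hopen : IsOpenMap (⇑(PxL (n := n) (m := m))) := by
      apply ContinuousLinearMap.isOpenMap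
      rw [← Pxproj_eq]; exact Pxproj_surjective
    have h0mem : (0 : Rsp n) ∈ ⇑PxL '' interior T := ⟨0, hint, map_zero _⟩
    exact interior_maximal (Set.image_mono interior_subset)
      (hopen _ isOpen_interior) h0mem

/-- the iterates 𝒯_k, 𝒫_k are proper C-sets. -/
theorem stmt_9 (n m : ℕ) (C : Set (Rsp2 n m)) (hC : IsProperCSet C)
    (A : Matrix (Fin n) (Fin n) ℝ) (B : Matrix (Fin n) (Fin m) ℝ)
    (S : Set (Rsp n)) (hS : IsCSet S)
    (T : ℕ → Set (Rsp2 n m)) (P : ℕ → Set (Rsp n))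
    (hT0 : T 0 = polarSet (polarSet C + Mtr A B '' S))
    (hP0 : P 0 = Pxproj '' T 0)
    (hTs : ∀ k : ℕ, T (k + 1) = polarSet (polarSet C + Mtr A B '' polarSet (P k)))
    (hPs : ∀ k : ℕ, P (k + 1) = Pxproj '' T (k + 1)) :
    ∀ k : ℕ, IsProperCSet (T k) ∧ IsProperCSet (P k) := by
  intro k
  induction k with
  | zero =>
    have hT : IsProperCSet (T 0) := by
      rw [hT0]
      exact step_properCSet hC A B hS.1 hS.2.2
    exact ⟨hT, hP0 ▸ proj_properCSet hT⟩
  | succ k ih =>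
    obtain ⟨_, hPk⟩ := ih
    have hWc : IsCompact (polarSet (P k)) :=
      Metric.isCompact_of_isClosed_isBounded (isClosed_polarSet _)
        (isBounded_polarSet hPk.2)
    have hT : IsProperCSet (T (k + 1)) := by
      rw [hTs k]
      exact step_properCSet hC A B hWc (zero_mem_polarSet _)
    exact ⟨hT, hPs k ▸ proj_properCSet hT⟩
end
end
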